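/- For every type A and every T : Set (List A): if Zorn(Set A, ⊊, ⟨T⟩) holds, where ⊊ is strict inclusion on Set A and the ambient set is ⟨T⟩, then TTL(A,T) holds. -/

import Mathlib

namespace Paper

universe u v

/-- `listSub u α` : every element of the list `u` belongs to `α` (written `u ⊂ α`). -/
def listSub {A : Type u} (u : List A) (α : Set A) : Prop := ∀ a ∈ u, a ∈ α

/-- `⟨T⟩` : the sets all of whose finite sublists are in `T`. -/
def eng {A : Type u} (T : Set (List A)) : Set (Set A) :=
  {α | ∀ l : List A, listSub l α → l ∈ T}

/-- `⟨T⟩∃` : the sets having some finite sublist in `T`. -/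
def engE {A : Type u} (T : Set (List A)) : Set (Set A) :=
  {α | ∃ l : List A, listSub l α ∧ l ∈ T}

/-- `û` : the set of elements of the list `u`. -/
def hat {A : Type u} (l : List A) : Set A := {a | a ∈ l}

/-- `⌊P⌋` : the lists whose set of elements is in `P`. -/
def res {A : Type u} (P : Set (Set A)) : Set (List A) := {l | hat l ∈ P}

/-- `β ≺ α` : `β` is an update of `α` by one new element. -/
def upd {A : Type u} (β α : Set A) : Prop := ∃ a, a ∉ α ∧ β = α ∪ {a}

/-- `α` is `≺`-maximal in `P`. -/
def MaxUpd {A : Type u} (P : Set (Set A)) (α : Set A) : Prop :=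
  α ∈ P ∧ ∀ β, upd β α → β ∉ P

/-- Teichmüller–Tukey lemma for `T`. -/
def TTL {A : Type u} (T : Set (List A)) : Prop :=
  (∃ α : Set A, α ∈ eng T) → ∃ α : Set A, MaxUpd (eng T) α

/-- `F` is a subchain of `E` with respect to the strict order `lt`. -/
def Subchain {X : Type u} (lt : X → X → Prop) (E F : Set X) : Prop :=
  F ⊆ E ∧ ∀ a ∈ F, ∀ b ∈ F, lt a b ∨ lt b a ∨ a = b

/-- `SCh E` : the set of subchains of `E`. -/
def SCh {X : Type u} (lt : X → X → Prop) (E : Set X) : Set (Set X) :=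
  {F | Subchain lt E F}

/-- `E` is inductive: every subchain has an upper bound in `E` for the
reflexive closure of `lt`. -/
def IsInductive {X : Type u} (lt : X → X → Prop) (E : Set X) : Prop :=
  ∀ F : Set X, Subchain lt E F → ∃ a ∈ E, ∀ b ∈ F, b = a ∨ lt b a

/-- `a` is `lt`-maximal in `E`. -/
def MaxLt {X : Type u} (lt : X → X → Prop) (E : Set X) (a : X) : Prop :=
  a ∈ E ∧ ∀ b, lt a b → b ∉ E

/-- Zorn's lemma for the strict order `lt` and the set `E`. -/
def Zorn {X : Type u} (lt : X → X → Prop) (E : Set X) : Prop :=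
  IsInductive lt E → ∃ a, MaxLt lt E a

/-- `Zorn(Set A, ⊊, ⟨T⟩)` implies `TTL(A,T)`. -/
theorem Zorn_ssubset_eng_implies_TTL (A : Type u) (T : Set (List A)) :
    Zorn (fun α β : Set A => α ⊂ β) (eng T) → TTL T := by
  intro hz hne
  have hind : IsInductive (fun α β : Set A => α ⊂ β) (eng T) := by
    intro F hF
    rcases F.eq_empty_or_nonempty with rfl | ⟨β₀, hβ₀⟩
    · obtain ⟨α₀, hα₀⟩ := hne
      exact ⟨α₀, hα₀, fun b hb => hb.elim⟩
    · refine ⟨⋃₀ F, ?_, ?_⟩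
      · intro l hl
        have key : ∀ l : List A, listSub l (⋃₀ F) → ∃ β ∈ F, listSub l β := by
          intro l
          induction l with
          | nil => intro _; exact ⟨β₀, hβ₀, fun a ha => absurd ha List.not_mem_nil⟩
          | cons a t ih =>
            intro h
            obtain ⟨β, hβF, hβt⟩ := ih (fun x hx => h x (List.mem_cons_of_mem a hx))
            obtain ⟨γ, hγF, haγ⟩ := h a List.mem_cons_self
            rcases hF.2 β hβF γ hγF with hlt | hlt | heq
            · exact ⟨γ, hγF, fun x hx => by
                rcases List.mem_cons.1 hx with rfl | hx
                · exact haγ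
                · exact hlt.1 (hβt x hx)⟩
            · exact ⟨β, hβF, fun x hx => by
                rcases List.mem_cons.1 hx with rfl | hx
                · exact hlt.1 haγ
                · exact hβt x hx⟩
            · subst heq
              exact ⟨β, hβF, fun x hx => by
                rcases List.mem_cons.1 hx with rfl | hx
                · exact haγ
                · exact hβt x hx⟩
        obtain ⟨β, hβF, hlβ⟩ := key l hl
        exact hF.1 hβF l hlβ
      · intro b hb
        by_cases heq : b = ⋃₀ F
        · exact Or.inl heq
        · refine Or.inr ⟨fun x hx => Set.mem_sUnion.2 ⟨b, hb, hx⟩, fun hsub => heq ?_⟩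
          exact Set.Subset.antisymm (fun x hx => Set.mem_sUnion.2 ⟨b, hb, hx⟩) hsub
  obtain ⟨α, hαE, hmax⟩ := hz hind
  refine ⟨α, hαE, ?_⟩
  rintro β ⟨a, haα, rfl⟩ hβE
  exact hmax (α ∪ {a}) ⟨Set.subset_union_left, fun hsub =>
    haα (hsub (Set.mem_union_right _ rfl))⟩ hβE

end Paper
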